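/- Let X ⊆ Y be nonempty finite sets of jobs (with sizes in (0, g(m)]). Then z⋄(X) ∈ A_i for some i ∈ T(z⋄(Y)); equivalently, the highest machine type used by the alternative machine configuration for X lies in one of the subtrees rooted at the nodes of T(z⋄(Y)), hence is at most z⋄(Y). -/

import Mathlib

open scoped Classical
open Finset MeasureTheory

namespace BSHM

noncomputable section

/-- The set of candidate parents of machine type `i`: types `j ∈ M` with `j > i`
and a strictly smaller normalized cost rate per capacity unit. -/
def pset (m : ℕ) (g r : ℕ → ℝ) (i : ℕ) : Set ℕ :=
  {j | j ≤ m ∧ i < j ∧ r j / g j < r i / g i}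

/-- The parent `p i` of machine type `i` (equal to `0` when the parent is undefined,
since any actual parent has index `≥ 2`). -/
def p (m : ℕ) (g r : ℕ → ℝ) (i : ℕ) : ℕ := sInf (pset m g r i)

/-- `pdef i` asserts that the parent of `i` is defined. -/
def pdef (m : ℕ) (g r : ℕ → ℝ) (i : ℕ) : Prop := (pset m g r i).Nonempty

/-- One step of the parent relation: `b` is the (defined) parent of `a`. -/
def pstep (m : ℕ) (g r : ℕ → ℝ) (a b : ℕ) : Prop :=
  pdef m g r a ∧ b = p m g r a

/-- `P i`: the set consisting of `i` together with all of its iterated parents. -/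
def P (m : ℕ) (g r : ℕ → ℝ) (i : ℕ) : Set ℕ :=
  {z | Relation.ReflTransGen (pstep m g r) i z}

/-- `A i`: the set of nodes in the tree rooted at `i`,
i.e. all `z ∈ M` having `i` as an ancestor (or equal to `i`). -/
def A (m : ℕ) (g r : ℕ → ℝ) (i : ℕ) : Set ℕ :=
  {z | 1 ≤ z ∧ z ≤ m ∧ i ∈ P m g r z}

/-- `v i`: the lowest-indexed node in the tree rooted at `i`. -/
def v (m : ℕ) (g r : ℕ → ℝ) (i : ℕ) : ℕ := sInf (A m g r i)

/-- `y i`: the younger siblings of `i` (same parent status, smaller index). -/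
def y (m : ℕ) (g r : ℕ → ℝ) (i : ℕ) : Set ℕ :=
  {z | 1 ≤ z ∧ z ≤ m ∧ z < i ∧ p m g r z = p m g r i}

/-- `esib i`: the elder siblings of `i`. -/
def esib (m : ℕ) (g r : ℕ → ℝ) (i : ℕ) : Set ℕ :=
  {z | 1 ≤ z ∧ z ≤ m ∧ i < z ∧ p m g r z = p m g r i}

/-- `T k := {k} ∪ ⋃_{z ∈ P(k)} y(z)`. -/
def T (m : ℕ) (g r : ℕ → ℝ) (k : ℕ) : Set ℕ :=
  {k} ∪ ⋃ z ∈ P m g r k, y m g r z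

/-- `T k` as a `Finset` (all relevant nodes lie in `{k} ∪ [1, m]`). -/
def TIcc (m : ℕ) (g r : ℕ → ℝ) (k : ℕ) : Finset ℕ :=
  (insert k (Finset.Icc 1 m)).filter (fun z => z ∈ T m g r k)

/-! ### Jobs and one-shot scheduling -/

variable {ι : Type*}

/-- The exact machine type of a job `J`: the least `z ∈ M` with `s J ≤ g z`. -/
def mty (m : ℕ) (g : ℕ → ℝ) (s : ι → ℝ) (J : ι) : ℕ :=
  sInf {z | 1 ≤ z ∧ z ≤ m ∧ s J ≤ g z}

/-- Total size of a finite set of jobs. -/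
def Ssum (s : ι → ℝ) (W : Finset ι) : ℝ := ∑ J ∈ W, s J

/-- `k0f X`: the highest-indexed exact machine type among the jobs of `X`. -/
def k0f (m : ℕ) (g : ℕ → ℝ) (s : ι → ℝ) (X : Finset ι) : ℕ :=
  X.sup (fun J => mty m g s J)

/-- `H z X`: the jobs of `X` whose exact machine type lies in the tree rooted at `z`. -/
def H (m : ℕ) (g r : ℕ → ℝ) (s : ι → ℝ) (z : ℕ) (X : Finset ι) : Finset ι :=
  X.filter (fun J => mty m g s J ∈ A m g r z)

/-- `SH X z := S(H_z(X))`. -/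
def SH (m : ℕ) (g r : ℕ → ℝ) (s : ι → ℝ) (X : Finset ι) (z : ℕ) : ℝ :=
  Ssum s (H m g r s z X)

/-- Feasibility of a machine configuration `w : M → ℕ` for the job set `X`. -/
def Feasible (m : ℕ) (g : ℕ → ℝ) (s : ι → ℝ) (X : Finset ι) (w : ℕ → ℕ) : Prop :=
  ∀ i, 1 ≤ i → i ≤ m →
    Ssum s (X.filter (fun J => i ≤ mty m g s J)) ≤ ∑ z ∈ Finset.Icc i m, (w z : ℝ) * g z

/-- The cost of a machine configuration. -/
def cost (m : ℕ) (r : ℕ → ℝ) (w : ℕ → ℕ) : ℝ :=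
  ∑ z ∈ Finset.Icc 1 m, (w z : ℝ) * r z

/-- The optimal one-shot scheduling cost for a job set `X`. -/
def OPT1 (m : ℕ) (g r : ℕ → ℝ) (s : ι → ℝ) (X : Finset ι) : ℝ :=
  sInf {c : ℝ | ∃ w : ℕ → ℕ, Feasible m g s X w ∧ c = cost m r w}

/-- The fractional machine configuration `cn_{z*}` for the job set `X`, with
highest-indexed machine type `zs`.  A node `i ∈ T(zs) \ {zs}` is the boundary
type `i*` exactly when `∑_{z ∈ T(zs), z > i} S(H_z) ≤ cn(zs)·g(zs) <
∑_{z ∈ T(zs), z ≥ i} S(H_z)`; nodes above the boundary get `0`,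
nodes below it get `S(H_i)/g_i`. -/
def cn (m : ℕ) (g r : ℕ → ℝ) (s : ι → ℝ) (X : Finset ι) (zs i : ℕ) : ℝ :=
  let B : ℝ := (⌈SH m g r s X zs / g zs⌉₊ : ℝ) * g zs
  let Sge : ℝ := ∑ z ∈ (TIcc m g r zs).filter (fun z => i ≤ z), SH m g r s X z
  let Sgt : ℝ := ∑ z ∈ (TIcc m g r zs).filter (fun z => i < z), SH m g r s X z
  if i = zs then (⌈SH m g r s X zs / g zs⌉₊ : ℝ)
  else if i ∈ T m g r zs then
    (if Sgt ≤ B ∧ B < Sge then (Sge - B) / g i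
     else if B < Sgt then SH m g r s X i / g i
     else 0)
  else 0

/-- `cn_{zs}` is decent: for every strict ancestor `zt` of `zs`, the total cost of
the machines of types in `T(zs) ∩ A(zt)` is at most the cost of one type-`zt` machine. -/
def decent (m : ℕ) (g r : ℕ → ℝ) (s : ι → ℝ) (X : Finset ι) (zs : ℕ) : Prop :=
  ∀ zt ∈ P m g r zs, zt ≠ zs →
    (∑ z ∈ (TIcc m g r zs).filter (fun z => z ∈ A m g r zt), cn m g r s X zs z * r z) ≤ r zt

/-- `z⋄(X)`: the least `z* ∈ P(k0(X))` such that `cn_{z*}` is decent. -/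
def zdia (m : ℕ) (g r : ℕ → ℝ) (s : ι → ℝ) (X : Finset ι) : ℕ :=
  sInf {zs | zs ∈ P m g r (k0f m g s X) ∧ decent m g r s X zs}

/-- The child of `zd` whose subtree contains node `k`. -/
def chil (m : ℕ) (g r : ℕ → ℝ) (zd k : ℕ) : ℕ :=
  sInf {i | p m g r i = zd ∧ k ∈ A m g r i}

/-- The node `i ∈ T(zd)` whose subtree contains node `k`. -/
def idxT (m : ℕ) (g r : ℕ → ℝ) (zd k : ℕ) : ℕ :=
  sInf {i | i ∈ T m g r zd ∧ k ∈ A m g r i}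

/-- The children `f(zd)` of node `zd`, as a `Finset`. -/
def fchFin (m : ℕ) (g r : ℕ → ℝ) (zd : ℕ) : Finset ℕ :=
  (Finset.Icc 1 m).filter (fun z => p m g r z = zd)

/-- The cost `r̃(X)(J)` charged to the job `J` of the job set `X`. -/
def charge (m : ℕ) (g r : ℕ → ℝ) (s : ι → ℝ) (X : Finset ι) (J : ι) : ℝ :=
  let zd := zdia m g r s X
  let ρ : ℕ → ℝ := fun i => r i / g i
  let Hh := X.filter (fun J' => mty m g s J' = zd)
  let c : ℝ := Ssum s Hh * ρ zd + ∑ i ∈ fchFin m g r zd, SH m g r s X i * ρ i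
  if mty m g s J ∈ A m g r zd then
    if g zd ≤ SH m g r s X zd then s J * ρ zd
    else if r zd < c then
      if mty m g s J = zd then s J * ρ zd
      else
        s J * (ρ (chil m g r zd (mty m g s J)) -
          (ρ (chil m g r zd (mty m g s J)) - ρ zd) *
            ((c - r zd) /
              (∑ i ∈ fchFin m g r zd, ∑ J' ∈ H m g r s i X, s J' * (ρ i - ρ zd))))
    else
      if mty m g s J = zd then s J * ρ zd * (1 + (r zd - c) / (Ssum s Hh * ρ zd))
      else s J * ρ (chil m g r zd (mty m g s J))
  else s J * ρ (idxT m g r zd (mty m g s J))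

end

end BSHM

namespace BSHM

section StructLemmas

variable (m : ℕ) (g r : ℕ → ℝ)

lemma p_mem {i : ℕ} (h : pdef m g r i) : p m g r i ∈ pset m g r i := Nat.sInf_mem h

lemma p_gt {i : ℕ} (h : pdef m g r i) : i < p m g r i := (p_mem m g r h).2.1

lemma p_le_m {i : ℕ} (h : pdef m g r i) : p m g r i ≤ m := (p_mem m g r h).1

lemma p_rho {i : ℕ} (h : pdef m g r i) :
    r (p m g r i) / g (p m g r i) < r i / g i := (p_mem m g r h).2.2

lemma pdef_of_p_ne_zero {i : ℕ} (h : p m g r i ≠ 0) : pdef m g r i := by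
  by_contra hc
  rw [pdef, Set.not_nonempty_iff_eq_empty] at hc
  rw [p, hc] at h
  simp at h

lemma p_eq_zero_of_not_pdef {i : ℕ} (h : ¬ pdef m g r i) : p m g r i = 0 := by
  rw [pdef, Set.not_nonempty_iff_eq_empty] at h
  rw [p, h]
  simp

lemma rho_le_of_between {i j : ℕ} (hij : i < j) (hjm : j ≤ m)
    (h : ¬ pdef m g r i ∨ j < p m g r i) : r i / g i ≤ r j / g j := by
  by_contra hc
  push_neg at hc
  have hjp : j ∈ pset m g r i := ⟨hjm, hij, hc⟩
  rcases h with h | h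
  · exact h ⟨j, hjp⟩
  · have hle : p m g r i ≤ j := Nat.sInf_le hjp
    omega

lemma reach_le {a b : ℕ} (h : b ∈ P m g r a) : a ≤ b := by
  induction h with
  | refl => exact le_rfl
  | tail _ hstep ih =>
      rename_i c d _
      have : c < d := hstep.2 ▸ p_gt m g r hstep.1
      omega

lemma reach_le_m {a b : ℕ} (ham : a ≤ m) (h : b ∈ P m g r a) : b ≤ m := by
  induction h with
  | refl => exact ham
  | tail _ hstep ih =>
      rename_i c d _
      exact hstep.2 ▸ p_le_m m g r hstep.1

lemma reach_head {a b : ℕ} (h : b ∈ P m g r a) (hne : b ≠ a) :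
    pdef m g r a ∧ b ∈ P m g r (p m g r a) := by
  rcases (Relation.ReflTransGen.cases_head h) with h' | ⟨c, hac, hcb⟩
  · exact absurd h'.symm hne
  · exact ⟨hac.1, hac.2 ▸ hcb⟩

lemma P_total {a b c : ℕ} (h1 : b ∈ P m g r a) :
    c ∈ P m g r a → c ∈ P m g r b ∨ b ∈ P m g r c := by
  induction h1 using Relation.ReflTransGen.head_induction_on with
  | refl => exact fun h2 => Or.inl h2
  | head step tl ih =>
      rename_i a' mid
      intro h2
      rcases (Relation.ReflTransGen.cases_head h2) with h' | ⟨d, had, hdc⟩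
      · exact Or.inr (h' ▸ (Relation.ReflTransGen.head step tl))
      · have : d = mid := had.2.trans step.2.symm
        exact ih (this ▸ hdc)

lemma P_le_total {a b c : ℕ} (h1 : b ∈ P m g r a) (h2 : c ∈ P m g r a) (hbc : b ≤ c) :
    c ∈ P m g r b := by
  rcases P_total m g r h1 h2 with h | h
  · exact h
  · have := reach_le m g r h
    have hbc' : b = c := le_antisymm hbc this
    exact hbc' ▸ Relation.ReflTransGen.refl

lemma climb {a : ℕ} (ha : pdef m g r a) :
    ∀ b, a ≤ b → b ≤ p m g r a → p m g r a ∈ P m g r b := by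
  have H : ∀ n b, p m g r a - b = n → a ≤ b → b ≤ p m g r a → p m g r a ∈ P m g r b := by
    intro n
    induction n using Nat.strong_induction_on with
    | _ n ih =>
      intro b hn hab hbp
      rcases eq_or_lt_of_le hbp with heq | hlt
      · exact heq ▸ Relation.ReflTransGen.refl
      rcases eq_or_lt_of_le hab with heq | hlt2
      · exact heq ▸ Relation.ReflTransGen.single ⟨ha, rfl⟩
      have hbm : b ≤ m := le_trans (le_of_lt hlt) (p_le_m m g r ha)
      have hrb : r a / g a ≤ r b / g b := rho_le_of_between m g r hlt2 hbm (Or.inr hlt)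
      have hpb : p m g r a ∈ pset m g r b :=
        ⟨p_le_m m g r ha, hlt, lt_of_lt_of_le (p_rho m g r ha) hrb⟩
      have hdb : pdef m g r b := ⟨_, hpb⟩
      have h1 : p m g r b ≤ p m g r a := Nat.sInf_le hpb
      have h2 : b < p m g r b := p_gt m g r hdb
      have h3 : p m g r a ∈ P m g r (p m g r b) :=
        ih (p m g r a - p m g r b) (by omega) _ rfl (by omega) h1
      exact Relation.ReflTransGen.head ⟨hdb, rfl⟩ h3
  exact fun b => H (p m g r a - b) b rfl

lemma reach_between {a c : ℕ} (h : c ∈ P m g r a) :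
    ∀ b, a ≤ b → b ≤ c → c ∈ P m g r b := by
  induction h using Relation.ReflTransGen.head_induction_on with
  | refl =>
      intro b h1 h2
      have : b = c := le_antisymm h2 h1
      exact this ▸ Relation.ReflTransGen.refl
  | head step tl ih =>
      rename_i a' mid
      intro b h1 h2
      by_cases hb : mid ≤ b
      · exact ih b hb h2
      · push_neg at hb
        have hmid : mid = p m g r a' := step.2
        have hclimb : p m g r a' ∈ P m g r b :=
          climb m g r step.1 b h1 (by omega)
        exact hclimb.trans (step.2 ▸ tl)

lemma y_lt_of_P {z w k : ℕ} (hz : z ∈ y m g r w) (hw : w ∈ P m g r k) : z < k := by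
  by_contra h
  push_neg at h
  have hzw : z < w := hz.2.2.1
  have hwz : w ∈ P m g r z := reach_between m g r hw z h (le_of_lt hzw)
  have hne : w ≠ z := Nat.ne_of_gt hzw
  obtain ⟨hdz, hwp⟩ := reach_head m g r hwz hne
  have hpz : p m g r z = p m g r w := hz.2.2.2
  by_cases hdw : pdef m g r w
  · have h1 := p_gt m g r hdw
    have h2 : p m g r z ≤ w := reach_le m g r hwp
    omega
  · have h0 : p m g r w = 0 := p_eq_zero_of_not_pdef m g r hdw
    have := p_gt m g r hdz
    omega

lemma T_self {k : ℕ} : k ∈ T m g r k := Or.inl rfl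

lemma mem_T_cases {z k : ℕ} (h : z ∈ T m g r k) :
    z = k ∨ ∃ w, w ∈ P m g r k ∧ z ∈ y m g r w := by
  rcases h with h | h
  · exact Or.inl h
  · rw [Set.mem_iUnion₂] at h
    obtain ⟨w, hw, hz⟩ := h
    exact Or.inr ⟨w, hw, hz⟩

lemma mem_T_of_y {z w k : ℕ} (hw : w ∈ P m g r k) (hz : z ∈ y m g r w) : z ∈ T m g r k :=
  Or.inr (Set.mem_iUnion₂.2 ⟨w, hw, hz⟩)

lemma T_le {z k : ℕ} (h : z ∈ T m g r k) : z ≤ k := by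
  rcases mem_T_cases m g r h with rfl | ⟨w, hw, hz⟩
  · exact le_rfl
  · exact le_of_lt (y_lt_of_P m g r hz hw)

lemma T_bounds {z k : ℕ} (hk1 : 1 ≤ k) (hkm : k ≤ m) (h : z ∈ T m g r k) :
    1 ≤ z ∧ z ≤ m := by
  rcases mem_T_cases m g r h with rfl | ⟨w, hw, hz⟩
  · exact ⟨hk1, hkm⟩
  · exact ⟨hz.1, hz.2.1⟩

lemma rho_T_le {z b k : ℕ} (hkm : k ≤ m) (hz : z ∈ T m g r k) (hzb : z < b) (hbk : b ≤ k) :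
    r z / g z ≤ r b / g b := by
  have hbm : b ≤ m := le_trans hbk hkm
  rcases mem_T_cases m g r hz with rfl | ⟨w, hw, hzy⟩
  · omega
  · by_cases hdz : pdef m g r z
    · have hpz : p m g r z = p m g r w := hzy.2.2.2
      have hpne : p m g r w ≠ 0 := by
        have := p_gt m g r hdz; omega
      have hdw : pdef m g r w := pdef_of_p_ne_zero m g r hpne
      have hwk : k ≤ w := reach_le m g r hw
      have hb : b < p m g r z := by
        have := p_gt m g r hdw; omega
      exact rho_le_of_between m g r hzb hbm (Or.inr hb)
    · exact rho_le_of_between m g r hzb hbm (Or.inl hdz)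

lemma T_sub {t zY : ℕ} (ht : t ∈ T m g r zY) : T m g r t ⊆ T m g r zY := by
  intro z hz
  rcases mem_T_cases m g r hz with rfl | ⟨w, hwP, hzy⟩
  · exact ht
  rcases mem_T_cases m g r ht with rfl | ⟨z1, hz1P, hty⟩
  · exact mem_T_of_y m g r hwP hzy
  rcases (Relation.ReflTransGen.cases_head hwP) with h' | ⟨c, htc, hcw⟩
  · -- w = t
    subst h'
    have hzy1 : z ∈ y m g r z1 :=
      ⟨hzy.1, hzy.2.1, lt_trans hzy.2.2.1 hty.2.2.1, hzy.2.2.2.trans hty.2.2.2⟩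
    exact mem_T_of_y m g r hz1P hzy1
  · -- pdef t, w ∈ P (p t), p t = p z1
    have hc : c = p m g r t := htc.2
    have hpt : p m g r t = p m g r z1 := hty.2.2.2
    have hptne : p m g r t ≠ 0 := by
      have := p_gt m g r htc.1; omega
    have hdz1 : pdef m g r z1 := pdef_of_p_ne_zero m g r (hpt ▸ hptne)
    have hq : p m g r z1 ∈ P m g r zY :=
      hz1P.tail ⟨hdz1, rfl⟩
    have hw : w ∈ P m g r zY := hq.trans (by rw [← hpt, ← hc]; exact hcw)
    exact mem_T_of_y m g r hw hzy

end StructLemmas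

section StructLemmas2

variable (m : ℕ) (g r : ℕ → ℝ)

lemma T_seg {t z zY : ℕ} (hzY1 : 1 ≤ zY) (hzYm : zY ≤ m)
    (ht : t ∈ T m g r zY) (hz : z ∈ T m g r zY) (hzt : z ≤ t) :
    z ∈ T m g r t := by
  rcases eq_or_lt_of_le hzt with rfl | hlt
  · exact T_self m g r
  rcases mem_T_cases m g r ht with rfl | ⟨z1, hz1P, hty⟩
  · exact hz
  have htzY : t < zY := y_lt_of_P m g r hty hz1P
  rcases mem_T_cases m g r hz with rfl | ⟨w, hwP, hzy⟩
  · omega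
  have hzw : z < w := hzy.2.2.1
  have htz1 : t < z1 := hty.2.2.1
  have hz1m : z1 ≤ m := reach_le_m m g r hzYm hz1P
  have hwm : w ≤ m := reach_le_m m g r hzYm hwP
  have hzYw : zY ≤ w := reach_le m g r hwP
  rcases lt_trichotomy w z1 with hlt1 | heq | hgt
  · -- w < z1 : impossible
    exfalso
    have hz1w : z1 ∈ P m g r w := P_le_total m g r hwP hz1P (le_of_lt hlt1)
    obtain ⟨hdw, hz1pw⟩ := reach_head m g r hz1w (by omega)
    have hpwz1 : p m g r w ≤ z1 := reach_le m g r hz1pw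
    have hpz : p m g r z = p m g r w := hzy.2.2.2
    have hdz : pdef m g r z := by
      apply pdef_of_p_ne_zero
      rw [hpz]
      have := p_gt m g r hdw; omega
    have hrz : r z / g z < r (p m g r z) / g (p m g r z) → False := by
      intro hcon
      exact absurd (p_rho m g r hdz) (not_lt.2 (le_of_lt hcon))
    -- rho t ≥ rho z  (z < t < p z)
    have hpzgt : t < p m g r z := by
      rw [hpz]
      have := p_gt m g r hdw
      omega
    have h1 : r z / g z ≤ r t / g t :=
      rho_le_of_between m g r hlt (by omega) (Or.inr hpzgt)
    -- rho (p w) ≥ rho t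
    have hptz1 : t < p m g r w := by omega
    have hor : ¬ pdef m g r t ∨ p m g r w < p m g r t := by
      have hptval : p m g r t = p m g r z1 := hty.2.2.2
      by_cases hdz1 : pdef m g r z1
      · right
        rw [hptval]
        have := p_gt m g r hdz1
        omega
      · left
        intro hdt
        have h0 : p m g r z1 = 0 := p_eq_zero_of_not_pdef m g r hdz1
        have := p_gt m g r hdt
        rw [hptval, h0] at this
        omega
    have h2 : r t / g t ≤ r (p m g r w) / g (p m g r w) := by
      have hpwm : p m g r w ≤ m := p_le_m m g r hdw
      exact rho_le_of_between m g r hptz1 hpwm hor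
    have h3 : r (p m g r z) / g (p m g r z) < r z / g z := p_rho m g r hdz
    rw [hpz] at h3
    have := le_trans h1 h2
    linarith
  · -- w = z1 : z ∈ y t
    subst heq
    have : z ∈ y m g r t := ⟨hzy.1, hzy.2.1, hlt, hzy.2.2.2.trans hty.2.2.2.symm⟩
    exact mem_T_of_y m g r Relation.ReflTransGen.refl this
  · -- w > z1 : w ∈ P (p t)
    have hwPz1 : w ∈ P m g r z1 := P_le_total m g r hz1P hwP (le_of_lt hgt)
    obtain ⟨hdz1, hwpz1⟩ := reach_head m g r hwPz1 (by omega)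
    have hptval : p m g r t = p m g r z1 := hty.2.2.2
    have hdt : pdef m g r t := by
      apply pdef_of_p_ne_zero
      rw [hptval]
      have := p_gt m g r hdz1; omega
    have hw : w ∈ P m g r t := Relation.ReflTransGen.head ⟨hdt, rfl⟩ (hptval ▸ hwpz1)
    exact mem_T_of_y m g r hw hzy

lemma exists_root {k : ℕ} (hk1 : 1 ≤ k) (hkm : k ≤ m) :
    ∃ z, z ∈ P m g r k ∧ k ≤ z ∧ z ≤ m ∧ ¬ pdef m g r z := by
  classical
  set S := (Finset.Icc k m).filter (fun c => c ∈ P m g r k) with hS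
  have hkS : k ∈ S := by
    simp [hS, Finset.mem_filter, Finset.mem_Icc, hkm]
    exact Relation.ReflTransGen.refl
  have hne : S.Nonempty := ⟨k, hkS⟩
  set z := S.max' hne with hz
  have hzS : z ∈ S := S.max'_mem hne
  rw [hS, Finset.mem_filter, Finset.mem_Icc] at hzS
  refine ⟨z, hzS.2, hzS.1.1, hzS.1.2, ?_⟩
  intro hd
  have hpz : p m g r z ∈ P m g r k := hzS.2.tail ⟨hd, rfl⟩
  have hmem : p m g r z ∈ S := by
    rw [hS, Finset.mem_filter, Finset.mem_Icc]
    exact ⟨⟨le_trans hzS.1.1 (le_of_lt (p_gt m g r hd)), p_le_m m g r hd⟩, hpz⟩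
  have := S.le_max' _ hmem
  have := p_gt m g r hd
  omega

lemma cover {k z : ℕ} (hk1 : 1 ≤ k) (hkm : k ≤ m) (hz1 : 1 ≤ z) (hzk : z ≤ k) :
    ∃ i, i ∈ T m g r k ∧ i ∈ P m g r z := by
  classical
  have H : ∀ n z, k - z = n → 1 ≤ z → z ≤ k → ∃ i, i ∈ T m g r k ∧ i ∈ P m g r z := by
    intro n
    induction n using Nat.strong_induction_on with
    | _ n ih =>
      intro z hn hz1 hzk
      rcases eq_or_lt_of_le hzk with rfl | hlt
      · exact ⟨z, T_self m g r, Relation.ReflTransGen.refl⟩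
      by_cases hrec : pdef m g r z ∧ p m g r z ≤ k
      · obtain ⟨hdz, hpk⟩ := hrec
        have hstep := p_gt m g r hdz
        obtain ⟨i, hiT, hiP⟩ := ih (k - p m g r z) (by omega) (p m g r z) rfl (by omega) hpk
        exact ⟨i, hiT, Relation.ReflTransGen.head ⟨hdz, rfl⟩ hiP⟩
      · by_cases hdz : pdef m g r z
        · -- p z > k
          push_neg at hrec
          have hq : k < p m g r z := hrec hdz
          set q := p m g r z with hqdef
          have hqm : q ≤ m := p_le_m m g r hdz
          set S := (Finset.Icc k m).filter (fun c => c ∈ P m g r k ∧ c < q) with hS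
          have hkS : k ∈ S := by
            simp [hS, Finset.mem_filter, Finset.mem_Icc, hkm, hq]
            exact Relation.ReflTransGen.refl
          have hne : S.Nonempty := ⟨k, hkS⟩
          set z' := S.max' hne with hz'
          have hz'S : z' ∈ S := S.max'_mem hne
          rw [hS, Finset.mem_filter, Finset.mem_Icc] at hz'S
          obtain ⟨⟨hkz', hz'm⟩, hz'P, hz'q⟩ := hz'S
          have hzz' : z < z' := by omega
          have hrho1 : r z / g z ≤ r z' / g z' :=
            rho_le_of_between m g r hzz' hz'm (Or.inr hz'q)
          have hqps : q ∈ pset m g r z' :=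
            ⟨hqm, hz'q, lt_of_lt_of_le (p_rho m g r hdz) hrho1⟩
          have hdz' : pdef m g r z' := ⟨q, hqps⟩
          have hpz'le : p m g r z' ≤ q := Nat.sInf_le hqps
          have hpz'gt : z' < p m g r z' := p_gt m g r hdz'
          have hpz'P : p m g r z' ∈ P m g r k := hz'P.tail ⟨hdz', rfl⟩
          have hpz'eq : p m g r z' = q := by
            by_contra hne'
            have hlt' : p m g r z' < q := by omega
            have hmem : p m g r z' ∈ S := by
              rw [hS, Finset.mem_filter, Finset.mem_Icc]
              exact ⟨⟨by omega, le_trans (le_of_lt hlt') hqm⟩, hpz'P, hlt'⟩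
            have := S.le_max' _ hmem
            omega
          have hzy : z ∈ y m g r z' := ⟨hz1, by omega, hzz', by rw [hpz'eq]⟩
          exact ⟨z, mem_T_of_y m g r hz'P hzy, Relation.ReflTransGen.refl⟩
        · -- z is a root
          obtain ⟨zr, hzrP, hkzr, hzrm, hzrnd⟩ := exists_root m g r hk1 hkm
          have hzy : z ∈ y m g r zr := by
            refine ⟨hz1, by omega, by omega, ?_⟩
            rw [p_eq_zero_of_not_pdef m g r hdz, p_eq_zero_of_not_pdef m g r hzrnd]
          exact ⟨z, mem_T_of_y m g r hzrP hzy, Relation.ReflTransGen.refl⟩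
  exact H (k - z) z rfl hz1 hzk

end StructLemmas2

section JobLemmas

variable {ι : Type*} (m : ℕ) (g r : ℕ → ℝ) (s : ι → ℝ)

lemma g_pos (hg1 : 0 < g 1) (hg : ∀ i j, 1 ≤ i → i < j → j ≤ m → g i < g j)
    {z : ℕ} (h1 : 1 ≤ z) (h2 : z ≤ m) : 0 < g z := by
  rcases eq_or_lt_of_le h1 with rfl | h
  · exact hg1
  · exact hg1.trans (hg 1 z le_rfl h h2)

lemma r_pos (hr1 : 0 < r 1) (hr : ∀ i j, 1 ≤ i → i < j → j ≤ m → r i < r j)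
    {z : ℕ} (h1 : 1 ≤ z) (h2 : z ≤ m) : 0 < r z := by
  rcases eq_or_lt_of_le h1 with rfl | h
  · exact hr1
  · exact hr1.trans (hr 1 z le_rfl h h2)

lemma g_mono (hg : ∀ i j, 1 ≤ i → i < j → j ≤ m → g i < g j)
    {i j : ℕ} (h1 : 1 ≤ i) (hij : i ≤ j) (hjm : j ≤ m) : g i ≤ g j := by
  rcases eq_or_lt_of_le hij with rfl | h
  · exact le_rfl
  · exact le_of_lt (hg i j h1 h hjm)

lemma mem_TIcc {k z : ℕ} (hk1 : 1 ≤ k) (hkm : k ≤ m) :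
    z ∈ TIcc m g r k ↔ z ∈ T m g r k := by
  rw [TIcc, Finset.mem_filter, Finset.mem_insert, Finset.mem_Icc]
  constructor
  · exact fun h => h.2
  · intro h
    refine ⟨?_, h⟩
    have := T_bounds m g r hk1 hkm h
    right; exact this

lemma mty_spec (hm : 1 ≤ m) {J : ι} (h2 : s J ≤ g m) :
    1 ≤ mty m g s J ∧ mty m g s J ≤ m ∧ s J ≤ g (mty m g s J) := by
  have hne : ({z | 1 ≤ z ∧ z ≤ m ∧ s J ≤ g z} : Set ℕ).Nonempty := ⟨m, hm, le_rfl, h2⟩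
  exact Nat.sInf_mem hne

lemma mty_lower {J : ι} (h2 : 2 ≤ mty m g s J) (hkm : mty m g s J - 1 ≤ m) :
    g (mty m g s J - 1) < s J := by
  have heq : mty m g s J = sInf {z | 1 ≤ z ∧ z ≤ m ∧ s J ≤ g z} := rfl
  have hnm : mty m g s J - 1 ∉ {z | 1 ≤ z ∧ z ≤ m ∧ s J ≤ g z} :=
    Nat.notMem_of_lt_sInf (by omega)
  simp only [Set.mem_setOf_eq, not_and, not_le] at hnm
  exact hnm (by omega) hkm

lemma k0f_le (hm : 1 ≤ m) {W : Finset ι} (hsW : ∀ J ∈ W, s J ≤ g m) :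
    k0f m g s W ≤ m :=
  Finset.sup_le fun J hJ => (mty_spec m g s hm (hsW J hJ)).2.1

lemma k0f_ge (hm : 1 ≤ m) {W : Finset ι} (hW : W.Nonempty) (hsW : ∀ J ∈ W, s J ≤ g m) :
    1 ≤ k0f m g s W := by
  obtain ⟨J, hJ⟩ := hW
  exact le_trans (mty_spec m g s hm (hsW J hJ)).1 (Finset.le_sup hJ)

lemma SH_nonneg {W : Finset ι} (hW : ∀ J ∈ W, 0 ≤ s J) (z : ℕ) :
    0 ≤ SH m g r s W z := by
  apply Finset.sum_nonneg
  intro J hJ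
  exact hW J (Finset.mem_filter.1 hJ).1

lemma SH_mono {W W' : Finset ι} (hWW : W ⊆ W') (hW' : ∀ J ∈ W', 0 ≤ s J) (z : ℕ) :
    SH m g r s W z ≤ SH m g r s W' z := by
  apply Finset.sum_le_sum_of_subset_of_nonneg
  · exact Finset.filter_subset_filter _ hWW
  · intro J hJ _
    exact hW' J (Finset.mem_filter.1 hJ).1

lemma SH_single_le {W : Finset ι} (hW : ∀ J ∈ W, 0 ≤ s J) {J : ι} {z : ℕ}
    (hJ : J ∈ W) (hmty : mty m g s J ∈ A m g r z) :
    s J ≤ SH m g r s W z := by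
  apply Finset.single_le_sum (f := s)
  · intro J' hJ'
    exact hW J' (Finset.mem_filter.1 hJ').1
  · exact Finset.mem_filter.2 ⟨hJ, hmty⟩

lemma zdia_spec (hm : 1 ≤ m) {W : Finset ι} (hW : W.Nonempty)
    (hsW : ∀ J ∈ W, s J ≤ g m) :
    zdia m g r s W ∈ P m g r (k0f m g s W) ∧ decent m g r s W (zdia m g r s W) := by
  have hk1 : 1 ≤ k0f m g s W := k0f_ge m g s hm hW hsW
  have hkm : k0f m g s W ≤ m := k0f_le m g s hm hsW
  obtain ⟨z, hzP, _, _, hnd⟩ := exists_root m g r hk1 hkm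
  have hdec : decent m g r s W z := by
    intro zt hzt hne
    exact absurd (reach_head m g r hzt hne).1 hnd
  have hmem : zdia m g r s W ∈ {zs | zs ∈ P m g r (k0f m g s W) ∧ decent m g r s W zs} :=
    Nat.sInf_mem ⟨z, hzP, hdec⟩
  exact hmem

end JobLemmas

section CoreLemmas

variable {ι : Type*} (m : ℕ) (g r : ℕ → ℝ) (s : ι → ℝ)

/-- The exact amount of capacity used at a non-top node, times `g z`. -/
lemma cn_mul_g {W : Finset ι} {zs z : ℕ} (hzT : z ∈ T m g r zs) (hzne : z ≠ zs)
    (hgz : g z ≠ 0)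
    (hsplit : (∑ u ∈ (TIcc m g r zs).filter (fun u => z ≤ u), SH m g r s W u)
            = SH m g r s W z + ∑ u ∈ (TIcc m g r zs).filter (fun u => z < u), SH m g r s W u)
    (hSH : 0 ≤ SH m g r s W z) :
    cn m g r s W zs z * g z
      = max (∑ u ∈ (TIcc m g r zs).filter (fun u => z ≤ u), SH m g r s W u)
            ((⌈SH m g r s W zs / g zs⌉₊ : ℝ) * g zs)
      - max (∑ u ∈ (TIcc m g r zs).filter (fun u => z < u), SH m g r s W u)
            ((⌈SH m g r s W zs / g zs⌉₊ : ℝ) * g zs) := by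
  set B : ℝ := (⌈SH m g r s W zs / g zs⌉₊ : ℝ) * g zs with hB
  set Sge : ℝ := ∑ u ∈ (TIcc m g r zs).filter (fun u => z ≤ u), SH m g r s W u with hSge
  set Sgt : ℝ := ∑ u ∈ (TIcc m g r zs).filter (fun u => z < u), SH m g r s W u with hSgt
  have hle : Sgt ≤ Sge := by rw [hsplit]; linarith
  rw [cn]
  simp only [if_neg hzne, if_pos hzT]
  rw [← hB, ← hSge, ← hSgt]
  split_ifs with h1 h2
  · rw [div_mul_cancel₀ _ hgz, max_eq_left (le_of_lt h1.2), max_eq_right h1.1]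
  · push_neg at h1
    have hgtB : B < Sgt := h2
    rw [div_mul_cancel₀ _ hgz, max_eq_left (le_trans (le_of_lt hgtB) hle),
      max_eq_left (le_of_lt hgtB), hsplit]
    ring
  · push_neg at h1 h2
    have hSgeB : Sge ≤ B := by
      by_cases hc : Sgt ≤ B
      · exact h1 hc
      · push_neg at hc; exact absurd hc (not_lt.2 h2)
    rw [max_eq_right hSgeB, max_eq_right h2, zero_mul, sub_self]

lemma cn_top {W : Finset ι} {zs : ℕ} :
    cn m g r s W zs zs = (⌈SH m g r s W zs / g zs⌉₊ : ℝ) := by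
  rw [cn]
  simp

lemma tele (W : Finset ι) (hW : ∀ J ∈ W, 0 ≤ s J)
    (hg1 : 0 < g 1) (hg : ∀ i j, 1 ≤ i → i < j → j ≤ m → g i < g j)
    {zs : ℕ} (h1 : 1 ≤ zs) (hzm : zs ≤ m) :
    ∀ w ∈ TIcc m g r zs,
      ∑ z ∈ (TIcc m g r zs).filter (fun z => w ≤ z), cn m g r s W zs z * g z
        = max (∑ z ∈ (TIcc m g r zs).filter (fun z => w ≤ z), SH m g r s W z)
              ((⌈SH m g r s W zs / g zs⌉₊ : ℝ) * g zs) := by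
  classical
  set B : ℝ := (⌈SH m g r s W zs / g zs⌉₊ : ℝ) * g zs with hB
  have hgzs : 0 < g zs := g_pos m g hg1 hg h1 hzm
  have hBtop : SH m g r s W zs ≤ B := by
    have h := Nat.le_ceil (SH m g r s W zs / g zs)
    calc SH m g r s W zs = SH m g r s W zs / g zs * g zs := by
          rw [div_mul_cancel₀ _ hgzs.ne']
      _ ≤ (⌈SH m g r s W zs / g zs⌉₊ : ℝ) * g zs := by
          exact mul_le_mul_of_nonneg_right h hgzs.le
  have hBnn : 0 ≤ B := by positivity
  have hmemTIcc : ∀ z, z ∈ TIcc m g r zs ↔ z ∈ T m g r zs :=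
    fun z => mem_TIcc m g r h1 hzm
  have htop : zs ∈ TIcc m g r zs := (hmemTIcc zs).2 (T_self m g r)
  have H : ∀ n w, zs - w = n → w ∈ TIcc m g r zs →
      ∑ z ∈ (TIcc m g r zs).filter (fun z => w ≤ z), cn m g r s W zs z * g z
        = max (∑ z ∈ (TIcc m g r zs).filter (fun z => w ≤ z), SH m g r s W z) B := by
    intro n
    induction n using Nat.strong_induction_on with
    | _ n ih =>
      intro w hn hwT
      have hwzs : w ≤ zs := T_le m g r ((hmemTIcc w).1 hwT)
      rcases eq_or_lt_of_le hwzs with heq | hlt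
      · -- w = zs
        subst heq
        have hset : (TIcc m g r w).filter (fun z => w ≤ z) = {w} := by
          apply Finset.ext
          intro z
          simp only [Finset.mem_filter, Finset.mem_singleton]
          constructor
          · intro ⟨hz, hwz⟩
            have := T_le m g r ((hmemTIcc z).1 hz)
            omega
          · rintro rfl; exact ⟨hwT, le_rfl⟩
        rw [hset, Finset.sum_singleton, Finset.sum_singleton]
        rw [cn_top m g r s, max_eq_right hBtop]
      · -- w < zs
        set U := (TIcc m g r zs).filter (fun z => w < z) with hU
        have hUne : U.Nonempty := ⟨zs, by simp [hU, Finset.mem_filter, htop, hlt]⟩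
        set w' := U.min' hUne with hw'
        have hw'U : w' ∈ U := U.min'_mem hUne
        rw [hU, Finset.mem_filter] at hw'U
        obtain ⟨hw'T, hww'⟩ := hw'U
        have hw'min : ∀ z ∈ TIcc m g r zs, w < z → w' ≤ z := by
          intro z hz hwz
          exact U.min'_le z (by rw [hU, Finset.mem_filter]; exact ⟨hz, hwz⟩)
        have hw'zs : w' ≤ zs := T_le m g r ((hmemTIcc w').1 hw'T)
        have hsetgt : (TIcc m g r zs).filter (fun z => w < z)
            = (TIcc m g r zs).filter (fun z => w' ≤ z) := by
          apply Finset.filter_congr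
          intro z hz
          exact ⟨fun h => hw'min z hz h, fun h => lt_of_lt_of_le hww' h⟩
        have hsetle : (TIcc m g r zs).filter (fun z => w ≤ z)
            = insert w ((TIcc m g r zs).filter (fun z => w' ≤ z)) := by
          apply Finset.ext
          intro z
          simp only [Finset.mem_filter, Finset.mem_insert]
          constructor
          · intro ⟨hz, hwz⟩
            rcases eq_or_lt_of_le hwz with rfl | h
            · exact Or.inl rfl
            · exact Or.inr ⟨hz, hw'min z hz h⟩
          · rintro (rfl | ⟨hz, h⟩)
            · exact ⟨hwT, le_rfl⟩
            · exact ⟨hz, le_trans (le_of_lt hww') h⟩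
        have hwnot : w ∉ (TIcc m g r zs).filter (fun z => w' ≤ z) := by
          simp only [Finset.mem_filter]
          rintro ⟨-, h⟩
          omega
        have hIH := ih (zs - w') (by omega) w' rfl ((hmemTIcc w').2 ((hmemTIcc w').1 hw'T))
        have hsplit : (∑ u ∈ (TIcc m g r zs).filter (fun u => w ≤ u), SH m g r s W u)
            = SH m g r s W w + ∑ u ∈ (TIcc m g r zs).filter (fun u => w < u), SH m g r s W u := by
          rw [hsetgt, hsetle, Finset.sum_insert hwnot]
        have hwne : w ≠ zs := by omega
        have hw1 : 1 ≤ w := (T_bounds m g r h1 hzm ((hmemTIcc w).1 hwT)).1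
        have hwm : w ≤ m := (T_bounds m g r h1 hzm ((hmemTIcc w).1 hwT)).2
        have hgw : g w ≠ 0 := (g_pos m g hg1 hg hw1 hwm).ne'
        have hcn := cn_mul_g m g r s ((hmemTIcc w).1 hwT) hwne hgw
          hsplit (SH_nonneg m g r s hW w)
        have hCsplit : (∑ z ∈ (TIcc m g r zs).filter (fun z => w ≤ z), cn m g r s W zs z * g z)
            = cn m g r s W zs w * g w
              + ∑ z ∈ (TIcc m g r zs).filter (fun z => w < z), cn m g r s W zs z * g z := by
          rw [hsetgt, hsetle, Finset.sum_insert hwnot]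
        have hIH2 : ∑ z ∈ (TIcc m g r zs).filter (fun z => w < z), cn m g r s W zs z * g z
            = max (∑ z ∈ (TIcc m g r zs).filter (fun z => w < z), SH m g r s W z) B := by
          rw [hsetgt]; exact hIH
        rw [hCsplit, hIH2, hcn, ← hB]
        ring
  intro w hw
  exact H (zs - w) w rfl hw

lemma abel_compare :
    ∀ (n : ℕ) (F : Finset ℕ) (ρ aX aY : ℕ → ℝ), F.card = n →
    (∀ z ∈ F, 0 ≤ ρ z) →
    (∀ a ∈ F, ∀ b ∈ F, a ≤ b → ρ a ≤ ρ b) →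
    (∀ w ∈ F, ∑ z ∈ F.filter (fun z => w ≤ z), aX z ≤ ∑ z ∈ F.filter (fun z => w ≤ z), aY z) →
    ∑ z ∈ F, ρ z * aX z ≤ ∑ z ∈ F, ρ z * aY z := by
  intro n
  induction n with
  | zero =>
      intro F ρ aX aY hcard _ _ _
      rw [Finset.card_eq_zero.1 hcard]
      simp
  | succ n ih =>
      intro F ρ aX aY hcard hρ0 hρm hS
      have hne : F.Nonempty := Finset.card_pos.1 (by omega)
      set w0 := F.min' hne with hw0
      have hw0F : w0 ∈ F := F.min'_mem hne
      have hfull : F.filter (fun z => w0 ≤ z) = F :=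
        Finset.filter_true_of_mem (fun z hz => F.min'_le z hz)
      have key : ∀ a : ℕ → ℝ, ∑ z ∈ F, ρ z * a z
          = ρ w0 * (∑ z ∈ F, a z) + ∑ z ∈ F.erase w0, (ρ z - ρ w0) * a z := by
        intro a
        have h1 : ∑ z ∈ F, (ρ z - ρ w0) * a z
            = ∑ z ∈ F.erase w0, (ρ z - ρ w0) * a z := by
          rw [← Finset.sum_erase F (a := w0) (by simp)]
        have h2 : ∑ z ∈ F, (ρ z - ρ w0) * a z
            = ∑ z ∈ F, ρ z * a z - ρ w0 * ∑ z ∈ F, a z := by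
          rw [Finset.mul_sum, ← Finset.sum_sub_distrib]
          congr 1
          ext z
          ring
        rw [← h1, h2]
        ring
      rw [key aX, key aY]
      have hterm1 : ρ w0 * (∑ z ∈ F, aX z) ≤ ρ w0 * (∑ z ∈ F, aY z) := by
        apply mul_le_mul_of_nonneg_left _ (hρ0 w0 hw0F)
        have := hS w0 hw0F
        rwa [hfull] at this
      have hterm2 : ∑ z ∈ F.erase w0, (ρ z - ρ w0) * aX z
          ≤ ∑ z ∈ F.erase w0, (ρ z - ρ w0) * aY z := by
        apply ih (F.erase w0) (fun z => ρ z - ρ w0) aX aY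
        · rw [Finset.card_erase_of_mem hw0F, hcard]
          omega
        · intro z hz
          have hzF := Finset.mem_of_mem_erase hz
          have := hρm w0 hw0F z hzF (F.min'_le z hzF)
          linarith
        · intro a ha b hb hab
          have haF := Finset.mem_of_mem_erase ha
          have hbF := Finset.mem_of_mem_erase hb
          have := hρm a haF b hbF hab
          linarith
        · intro w hw
          have hwF := Finset.mem_of_mem_erase hw
          have hwgt : w0 < w := by
            rcases eq_or_lt_of_le (F.min'_le w hwF) with h | h
            · exact absurd h.symm (Finset.ne_of_mem_erase hw)
            · exact h
          have hset : (F.erase w0).filter (fun z => w ≤ z) = F.filter (fun z => w ≤ z) := by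
            apply Finset.ext
            intro z
            simp only [Finset.mem_filter, Finset.mem_erase]
            constructor
            · exact fun ⟨⟨_, hz⟩, hwz⟩ => ⟨hz, hwz⟩
            · intro ⟨hz, hwz⟩
              exact ⟨⟨by omega, hz⟩, hwz⟩
          rw [hset]
          exact hS w hwF
      linarith

end CoreLemmas

section Transfer

variable {ι : Type*}

lemma transfer (m : ℕ) (g r : ℕ → ℝ) (s : ι → ℝ)
    (hm : 1 ≤ m) (hg1 : 0 < g 1) (hr1 : 0 < r 1)
    (hg : ∀ i j, 1 ≤ i → i < j → j ≤ m → g i < g j)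
    (hr : ∀ i j, 1 ≤ i → i < j → j ≤ m → r i < r j)
    {X Y : Finset ι} (hXY : X ⊆ Y) (hX : X.Nonempty) (hY : Y.Nonempty)
    (hs : ∀ J ∈ Y, 0 < s J ∧ s J ≤ g m)
    {t : ℕ} (htT : t ∈ T m g r (zdia m g r s Y)) (htP : t ∈ P m g r (k0f m g s X)) :
    decent m g r s X t := by
  classical
  set zY := zdia m g r s Y with hzYdef
  intro zt hztP hztne
  have hsY : ∀ J ∈ Y, 0 ≤ s J := fun J hJ => (hs J hJ).1.le
  have hsX : ∀ J ∈ X, 0 ≤ s J := fun J hJ => hsY J (hXY hJ)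
  have hsYm : ∀ J ∈ Y, s J ≤ g m := fun J hJ => (hs J hJ).2
  have hsXm : ∀ J ∈ X, s J ≤ g m := fun J hJ => hsYm J (hXY hJ)
  obtain ⟨hzYP, hzYdec⟩ := zdia_spec m g r s hm hY hsYm
  have hk0X1 : 1 ≤ k0f m g s X := k0f_ge m g s hm hX hsXm
  have hk0Xm : k0f m g s X ≤ m := k0f_le m g s hm hsXm
  have hk0Y1 : 1 ≤ k0f m g s Y := k0f_ge m g s hm hY hsYm
  have hk0Ym : k0f m g s Y ≤ m := k0f_le m g s hm hsYm
  have ht1 : 1 ≤ t := le_trans hk0X1 (reach_le m g r htP)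
  have hzY1 : 1 ≤ zY := le_trans hk0Y1 (reach_le m g r hzYP)
  have hzYm : zY ≤ m := reach_le_m m g r hk0Ym hzYP
  have htzY : t ≤ zY := T_le m g r htT
  have htm : t ≤ m := le_trans htzY hzYm
  obtain ⟨hdt, hztPp⟩ := reach_head m g r hztP hztne
  have hztt : t < zt := by
    have h1 := reach_le m g r hztPp
    have h2 := p_gt m g r hdt
    omega
  have hztm : zt ≤ m := reach_le_m m g r htm hztP
  have hzt1 : 1 ≤ zt := by omega
  have hztzY : zt ∈ P m g r zY ∧ zY < zt := by
    rcases eq_or_ne t zY with heq | htne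
    · refine ⟨heq ▸ hztP, ?_⟩
      omega
    · rcases mem_T_cases m g r htT with heq | ⟨z1, hz1P, hty⟩
      · exact absurd heq htne
      have hpt : p m g r t = p m g r z1 := hty.2.2.2
      have hptne : p m g r t ≠ 0 := by have := p_gt m g r hdt; omega
      have hdz1 : pdef m g r z1 := pdef_of_p_ne_zero m g r (by rw [← hpt]; exact hptne)
      have hq : p m g r z1 ∈ P m g r zY := hz1P.tail ⟨hdz1, rfl⟩
      have hzt' : zt ∈ P m g r zY := hq.trans (hpt ▸ hztPp)
      have hlt : zY < zt := by
        have h1 : zY ≤ z1 := reach_le m g r hz1P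
        have h2 : z1 < p m g r z1 := p_gt m g r hdz1
        have h3 : p m g r z1 ≤ zt := reach_le m g r (hpt ▸ hztPp)
        omega
      exact ⟨hzt', hlt⟩
  have hdY := hzYdec zt hztzY.1 (by have := hztzY.2; omega)
  -- abbreviations
  set FY := (TIcc m g r zY).filter (fun z => z ∈ A m g r zt) with hFY
  have hmemFY : ∀ z ∈ FY, z ∈ T m g r zY ∧ 1 ≤ z ∧ z ≤ m ∧ z ∈ A m g r zt := by
    intro z hz
    rw [hFY, Finset.mem_filter] at hz
    have hzT := (mem_TIcc m g r hzY1 hzYm).1 hz.1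
    have hb := T_bounds m g r hzY1 hzYm hzT
    exact ⟨hzT, hb.1, hb.2, hz.2⟩
  have hTsub : ∀ z, z ∈ TIcc m g r t → z ∈ TIcc m g r zY := by
    intro z hz
    rw [mem_TIcc m g r ht1 htm] at hz
    rw [mem_TIcc m g r hzY1 hzYm]
    exact T_sub m g r htT hz
  have hgne : ∀ z, 1 ≤ z → z ≤ m → g z ≠ 0 := fun z h1 h2 => (g_pos m g hg1 hg h1 h2).ne'
  have hterm : ∀ z : ℕ, g z ≠ 0 → ∀ c : ℝ, r z / g z * (c * g z) = c * r z := by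
    intro z h c
    field_simp
  -- the up-closedness of the region A zt within T zY
  have hup : ∀ w, w ∈ A m g r zt → ∀ z, z ∈ TIcc m g r zY → w ≤ z → z ∈ A m g r zt := by
    intro w hwA z hz hwz
    have hzT := (mem_TIcc m g r hzY1 hzYm).1 hz
    have hzb := T_bounds m g r hzY1 hzYm hzT
    have hzzY := T_le m g r hzT
    refine ⟨hzb.1, hzb.2, ?_⟩
    exact reach_between m g r hwA.2.2 z hwz (by have := hztzY.2; omega)
  -- partial-sum comparison
  have hSS : ∀ w ∈ FY,
      ∑ z ∈ FY.filter (fun z => w ≤ z),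
          (if z ∈ TIcc m g r t then cn m g r s X t z * g z else 0)
        ≤ ∑ z ∈ FY.filter (fun z => w ≤ z), cn m g r s Y zY z * g z := by
    intro w hw
    obtain ⟨hwT, hw1, hwm, hwA⟩ := hmemFY w hw
    have hwTIcc : w ∈ TIcc m g r zY := (Finset.mem_filter.1 (hFY ▸ hw)).1
    have hsetY : FY.filter (fun z => w ≤ z) = (TIcc m g r zY).filter (fun z => w ≤ z) := by
      apply Finset.ext
      intro z
      rw [hFY]
      simp only [Finset.mem_filter]
      constructor
      · intro ⟨⟨h1, _⟩, h2⟩; exact ⟨h1, h2⟩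
      · intro ⟨h1, h2⟩; exact ⟨⟨h1, hup w hwA z h1 h2⟩, h2⟩
    have hteleY := tele m g r s Y hsY hg1 hg hzY1 hzYm w hwTIcc
    have hBYnn : (0:ℝ) ≤ (⌈SH m g r s Y zY / g zY⌉₊ : ℝ) * g zY :=
      mul_nonneg (Nat.cast_nonneg _) (g_pos m g hg1 hg hzY1 hzYm).le
    by_cases hwX : w ∈ TIcc m g r t
    · -- w is in the lower tree as well
      have hwt : w ≤ t := T_le m g r ((mem_TIcc m g r ht1 htm).1 hwX)
      have hsetX : (FY.filter (fun z => w ≤ z)).filter (fun z => z ∈ TIcc m g r t)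
          = (TIcc m g r t).filter (fun z => w ≤ z) := by
        apply Finset.ext
        intro z
        rw [hsetY]
        simp only [Finset.mem_filter]
        constructor
        · intro ⟨⟨_, h2⟩, h3⟩; exact ⟨h3, h2⟩
        · intro ⟨h1, h2⟩
          exact ⟨⟨hTsub z h1, h2⟩, h1⟩
      have hXsum : ∑ z ∈ FY.filter (fun z => w ≤ z),
          (if z ∈ TIcc m g r t then cn m g r s X t z * g z else 0)
          = ∑ z ∈ (TIcc m g r t).filter (fun z => w ≤ z), cn m g r s X t z * g z := by
        rw [← hsetX]
        exact (Finset.sum_filter _ _).symm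
      have hteleX := tele m g r s X hsX hg1 hg ht1 htm w hwX
      rw [hXsum, hteleX, hsetY, hteleY]
      -- compare the two maxima
      have hle1 : ∑ z ∈ (TIcc m g r t).filter (fun z => w ≤ z), SH m g r s X z
          ≤ ∑ z ∈ (TIcc m g r zY).filter (fun z => w ≤ z), SH m g r s Y z := by
        calc ∑ z ∈ (TIcc m g r t).filter (fun z => w ≤ z), SH m g r s X z
            ≤ ∑ z ∈ (TIcc m g r t).filter (fun z => w ≤ z), SH m g r s Y z :=
              Finset.sum_le_sum (fun z _ => SH_mono m g r s hXY hsY z)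
          _ ≤ ∑ z ∈ (TIcc m g r zY).filter (fun z => w ≤ z), SH m g r s Y z := by
              apply Finset.sum_le_sum_of_subset_of_nonneg
              · apply Finset.filter_subset_filter
                intro z hz
                exact hTsub z hz
              · exact fun z _ _ => SH_nonneg m g r s hsY z
      have hBX_le : (⌈SH m g r s X t / g t⌉₊ : ℝ) * g t
          ≤ max (∑ z ∈ (TIcc m g r zY).filter (fun z => w ≤ z), SH m g r s Y z)
              ((⌈SH m g r s Y zY / g zY⌉₊ : ℝ) * g zY) := by
        rcases eq_or_ne t zY with heq | htne
        · apply le_max_of_le_right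
          rw [heq]
          have hdiv : SH m g r s X zY / g zY ≤ SH m g r s Y zY / g zY :=
            div_le_div_of_nonneg_right (SH_mono m g r s hXY hsY zY)
              (g_pos m g hg1 hg hzY1 hzYm).le
          exact mul_le_mul_of_nonneg_right
            (Nat.cast_le.2 (Nat.ceil_mono hdiv)) (g_pos m g hg1 hg hzY1 hzYm).le
        · apply le_max_of_le_left
          have htltzY : t < zY := lt_of_le_of_ne htzY htne
          obtain ⟨J0, hJ0Y, hJ0⟩ := Finset.exists_mem_eq_sup Y hY (fun J => mty m g s J)
          have hmtyJ0 : mty m g s J0 = k0f m g s Y := hJ0.symm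
          have htk0Y : t < k0f m g s Y := by
            rcases mem_T_cases m g r htT with heq | ⟨z1, hz1P, hty⟩
            · exact absurd heq htne
            · exact y_lt_of_P m g r hty (hzYP.trans hz1P)
          have hgt_le : g t ≤ g (k0f m g s Y - 1) :=
            g_mono m g hg ht1 (by omega) (by omega)
          have hsJ0 : g (k0f m g s Y - 1) < s J0 := by
            have h2m : 2 ≤ mty m g s J0 := by omega
            have hmm : mty m g s J0 - 1 ≤ m := by omega
            have := mty_lower m g s h2m hmm
            rwa [hmtyJ0] at this
          have hk0YA : mty m g s J0 ∈ A m g r zY := by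
            rw [hmtyJ0]
            exact ⟨hk0Y1, hk0Ym, hzYP⟩
          have hSHzY : g t ≤ SH m g r s Y zY := by
            have h1 := SH_single_le m g r s hsY hJ0Y hk0YA
            have h2 := lt_of_le_of_lt hgt_le hsJ0
            linarith
          have hBXle : (⌈SH m g r s X t / g t⌉₊ : ℝ) * g t ≤ SH m g r s X t + g t := by
            have hgt : (0:ℝ) < g t := g_pos m g hg1 hg ht1 htm
            have h0 : (0:ℝ) ≤ SH m g r s X t / g t :=
              div_nonneg (SH_nonneg m g r s hsX t) hgt.le
            have hceil := Nat.ceil_lt_add_one h0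
            calc (⌈SH m g r s X t / g t⌉₊ : ℝ) * g t
                ≤ (SH m g r s X t / g t + 1) * g t :=
                  mul_le_mul_of_nonneg_right hceil.le hgt.le
              _ = SH m g r s X t + g t := by field_simp
          have hpair : SH m g r s Y t + SH m g r s Y zY
              ≤ ∑ z ∈ (TIcc m g r zY).filter (fun z => w ≤ z), SH m g r s Y z := by
            have hsub : ({t, zY} : Finset ℕ) ⊆ (TIcc m g r zY).filter (fun z => w ≤ z) := by
              intro z hz
              rcases Finset.mem_insert.1 hz with rfl | hz'
              · exact Finset.mem_filter.2 ⟨hTsub z ((mem_TIcc m g r ht1 htm).2 (T_self m g r)), hwt⟩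
              · rw [Finset.mem_singleton] at hz'
                subst hz'
                exact Finset.mem_filter.2
                  ⟨(mem_TIcc m g r hzY1 hzYm).2 (T_self m g r), by omega⟩
            calc SH m g r s Y t + SH m g r s Y zY
                = ∑ z ∈ ({t, zY} : Finset ℕ), SH m g r s Y z :=
                  (Finset.sum_pair htne).symm
              _ ≤ _ := Finset.sum_le_sum_of_subset_of_nonneg hsub
                  (fun z _ _ => SH_nonneg m g r s hsY z)
          have hXt : SH m g r s X t ≤ SH m g r s Y t := SH_mono m g r s hXY hsY t
          linarith
      exact max_le (le_trans hle1 (le_max_left _ _)) hBX_le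
    · -- w is above the lower tree: the X-side sum vanishes
      have hzero : ∑ z ∈ FY.filter (fun z => w ≤ z),
          (if z ∈ TIcc m g r t then cn m g r s X t z * g z else 0) = 0 := by
        apply Finset.sum_eq_zero
        intro z hz
        rw [Finset.mem_filter] at hz
        by_cases hzt' : z ∈ TIcc m g r t
        · exfalso
          have hzT : z ∈ T m g r t := (mem_TIcc m g r ht1 htm).1 hzt'
          have hzle : z ≤ t := T_le m g r hzT
          have hwz : w ≤ z := hz.2
          have hwTt : w ∈ T m g r t := T_seg m g r hzY1 hzYm htT hwT (by omega)
          exact hwX ((mem_TIcc m g r ht1 htm).2 hwTt)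
        · rw [if_neg hzt']
      rw [hzero, hsetY, hteleY]
      exact le_trans hBYnn (le_max_right _ _)
  -- monotone nonnegative prices
  have hρ0 : ∀ z ∈ FY, 0 ≤ r z / g z := by
    intro z hz
    obtain ⟨_, h1, h2, _⟩ := hmemFY z hz
    exact div_nonneg (r_pos m r hr1 hr h1 h2).le (g_pos m g hg1 hg h1 h2).le
  have hρm : ∀ a ∈ FY, ∀ b ∈ FY, a ≤ b → r a / g a ≤ r b / g b := by
    intro a ha b hb hab
    rcases eq_or_lt_of_le hab with rfl | h
    · exact le_rfl
    · obtain ⟨haT, _, _, _⟩ := hmemFY a ha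
      obtain ⟨hbT, _, _, _⟩ := hmemFY b hb
      exact rho_T_le m g r hzYm haT h (T_le m g r hbT)
  have habel := abel_compare FY.card FY (fun z => r z / g z)
      (fun z => if z ∈ TIcc m g r t then cn m g r s X t z * g z else 0)
      (fun z => cn m g r s Y zY z * g z) rfl hρ0 hρm hSS
  -- identify the two sides
  have hFXsub : (TIcc m g r t).filter (fun z => z ∈ A m g r zt)
      = FY.filter (fun z => z ∈ TIcc m g r t) := by
    apply Finset.ext
    intro z
    rw [hFY]
    simp only [Finset.mem_filter]
    constructor
    · intro ⟨h1, h2⟩; exact ⟨⟨hTsub z h1, h2⟩, h1⟩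
    · intro ⟨⟨_, h2⟩, h3⟩; exact ⟨h3, h2⟩
  have hXeq : ∑ z ∈ FY, (r z / g z) * (if z ∈ TIcc m g r t then cn m g r s X t z * g z else 0)
      = ∑ z ∈ (TIcc m g r t).filter (fun z => z ∈ A m g r zt), cn m g r s X t z * r z := by
    rw [hFXsub]
    rw [← Finset.sum_filter_add_sum_filter_not FY (fun z => z ∈ TIcc m g r t)
      (fun z => (r z / g z) * (if z ∈ TIcc m g r t then cn m g r s X t z * g z else 0))]
    have h2 : ∑ z ∈ FY.filter (fun z => ¬ z ∈ TIcc m g r t),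
        (r z / g z) * (if z ∈ TIcc m g r t then cn m g r s X t z * g z else 0) = 0 := by
      apply Finset.sum_eq_zero
      intro z hz
      rw [Finset.mem_filter] at hz
      rw [if_neg hz.2, mul_zero]
    rw [h2, add_zero]
    apply Finset.sum_congr rfl
    intro z hz
    rw [Finset.mem_filter] at hz
    obtain ⟨_, h1, h2', _⟩ := hmemFY z hz.1
    rw [if_pos hz.2, hterm z (hgne z h1 h2') _]
  have hYeq : ∑ z ∈ FY, (r z / g z) * (cn m g r s Y zY z * g z)
      = ∑ z ∈ FY, cn m g r s Y zY z * r z := by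
    apply Finset.sum_congr rfl
    intro z hz
    obtain ⟨_, h1, h2, _⟩ := hmemFY z hz
    rw [hterm z (hgne z h1 h2) _]
  calc ∑ z ∈ (TIcc m g r t).filter (fun z => z ∈ A m g r zt), cn m g r s X t z * r z
      = ∑ z ∈ FY, (r z / g z) * (if z ∈ TIcc m g r t then cn m g r s X t z * g z else 0) :=
        hXeq.symm
    _ ≤ ∑ z ∈ FY, (r z / g z) * (cn m g r s Y zY z * g z) := habel
    _ = ∑ z ∈ FY, cn m g r s Y zY z * r z := hYeq
    _ ≤ r zt := hdY

end Transfer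


/-- Let `X ⊆ Y` be nonempty finite sets of jobs with sizes in
`(0, g m]`.  Then `z⋄(X) ∈ A(i)` for some `i ∈ T(z⋄(Y))`. -/
theorem statement_15 {ι : Type*} (m : ℕ) (g r : ℕ → ℝ) (s : ι → ℝ)
    (X Y : Finset ι)
    (hm : 1 ≤ m)
    (hg1 : 0 < g 1) (hr1 : 0 < r 1)
    (hg : ∀ i j, 1 ≤ i → i < j → j ≤ m → g i < g j)
    (hr : ∀ i j, 1 ≤ i → i < j → j ≤ m → r i < r j)
    (hXY : X ⊆ Y) (hX : X.Nonempty) (hY : Y.Nonempty)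
    (hs : ∀ J ∈ Y, 0 < s J ∧ s J ≤ g m) :
    ∃ i ∈ T m g r (zdia m g r s Y), zdia m g r s X ∈ A m g r i := by
  classical
  have hsYm : ∀ J ∈ Y, s J ≤ g m := fun J hJ => (hs J hJ).2
  have hsXm : ∀ J ∈ X, s J ≤ g m := fun J hJ => (hs J (hXY hJ)).2
  obtain ⟨hzYP, _⟩ := zdia_spec m g r s hm hY hsYm
  have hk0X1 : 1 ≤ k0f m g s X := k0f_ge m g s hm hX hsXm
  have hk0Xm : k0f m g s X ≤ m := k0f_le m g s hm hsXm
  have hk0Y1 : 1 ≤ k0f m g s Y := k0f_ge m g s hm hY hsYm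
  have hk0Ym : k0f m g s Y ≤ m := k0f_le m g s hm hsYm
  have hzY1 : 1 ≤ zdia m g r s Y := le_trans hk0Y1 (reach_le m g r hzYP)
  have hzYm : zdia m g r s Y ≤ m := reach_le_m m g r hk0Ym hzYP
  have hk0XY : k0f m g s X ≤ k0f m g s Y := Finset.sup_mono hXY
  have hk0XzY : k0f m g s X ≤ zdia m g r s Y := le_trans hk0XY (reach_le m g r hzYP)
  obtain ⟨t, htT, htP⟩ := cover m g r hzY1 hzYm hk0X1 hk0XzY
  have hdecX := transfer m g r s hm hg1 hr1 hg hr hXY hX hY hs htT htP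
  obtain ⟨hzXP, _⟩ := zdia_spec m g r s hm hX hsXm
  have hzXle : zdia m g r s X ≤ t := Nat.sInf_le ⟨htP, hdecX⟩
  have htPzX : t ∈ P m g r (zdia m g r s X) := P_le_total m g r hzXP htP hzXle
  exact ⟨t, htT, le_trans hk0X1 (reach_le m g r hzXP),
    reach_le_m m g r hk0Xm hzXP, htPzX⟩


end BSHM
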